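/- Let α > 0 and let f ∈ B₁(α) with Taylor coefficients a₂, a₃. Then |a₃ − ((α+3)/(2(α+2))) a₂²| ≤ 2/(α+2) − ((α+1)²/(2(α+2))) |a₂|². -/

import Mathlib

open Complex Metric

/-- The Bazilevič class `B₁(α)`: `f` is analytic on the unit disk with `f 0 = 0`,
`f' 0 = 1`, and `Re[(f z / z)^(α-1) * f' z] > 0` on the disk, where the power is taken
with the analytic branch equal to `1` at `z = 0`.  The branch is encoded via an analytic
function `h` with `h 0 = 0` and `f z = z * exp (h z)` on the disk (so that
`h = log (f z / z)` and `(f z / z)^(α-1) = exp ((α-1) * h z)`). -/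
def BazilevicB1 (α : ℝ) (f h : ℂ → ℂ) : Prop :=
  AnalyticOnNhd ℂ f (ball 0 1) ∧ AnalyticOnNhd ℂ h (ball 0 1) ∧
  f 0 = 0 ∧ deriv f 0 = 1 ∧ h 0 = 0 ∧
  (∀ z ∈ ball (0 : ℂ) 1, f z = z * Complex.exp (h z)) ∧
  (∀ z ∈ ball (0 : ℂ) 1, 0 < (Complex.exp ((α - 1 : ℂ) * h z) * deriv f z).re)

/-- The first logarithmic coefficient `γ₁`, from `h = log (f z / z) = 2 ∑ γₙ zⁿ`. -/
noncomputable def logCoeff1 (h : ℂ → ℂ) : ℂ := deriv h 0 / 2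

/-- The second logarithmic coefficient `γ₂`, from `h = log (f z / z) = 2 ∑ γₙ zⁿ`. -/
noncomputable def logCoeff2 (h : ℂ → ℂ) : ℂ := iteratedDeriv 2 h 0 / 4

/-- The second Taylor coefficient `a₂` of `f`. -/
noncomputable def coeff2 (f : ℂ → ℂ) : ℂ := iteratedDeriv 2 f 0 / 2

/-- The third Taylor coefficient `a₃` of `f`. -/
noncomputable def coeff3 (f : ℂ → ℂ) : ℂ := iteratedDeriv 3 f 0 / 6


private lemma zeromem : (0:ℂ) ∈ ball (0:ℂ) 1 := mem_ball_self one_pos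

/-- Schwarz–Pick at the origin: if `g` is holomorphic on the unit disk with `|g| ≤ 1`,
then `|g'(0)| ≤ 1 - |g 0|^2`. -/
lemma schwarzPick0 {g : ℂ → ℂ} (hg : DifferentiableOn ℂ g (ball 0 1))
    (hb : ∀ z ∈ ball (0:ℂ) 1, ‖g z‖ ≤ 1) :
    ‖deriv g 0‖ ≤ 1 - ‖g 0‖ ^ 2 := by
  have hb1 : ‖g 0‖ ≤ 1 := hb 0 zeromem
  rcases eq_or_lt_of_le hb1 with heq | hlt
  · -- |g 0| = 1 : g is constant by the maximum principle
    have hmax : IsMaxOn (norm ∘ g) (ball (0:ℂ) 1) 0 := by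
      intro z hz
      simpa [heq] using hb z hz
    have hcong := Complex.eqOn_of_isPreconnected_of_isMaxOn_norm
      (convex_ball (0:ℂ) 1).isPreconnected isOpen_ball hg zeromem hmax
    have hd0 : deriv g 0 = 0 := by
      have : deriv g 0 = deriv (Function.const ℂ (g 0)) 0 :=
        Filter.EventuallyEq.deriv_eq
          (Filter.eventuallyEq_of_mem (isOpen_ball.mem_nhds zeromem) hcong)
      rw [this]
      exact deriv_const 0 (g 0)
    rw [hd0, norm_zero, heq]; norm_num
  · -- |g 0| < 1
    set b := g 0 with hbdef
    have hden : ∀ z ∈ ball (0:ℂ) 1, (1 : ℂ) - (starRingEnd ℂ) b * g z ≠ 0 := by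
      intro z hz
      have habs : ‖(starRingEnd ℂ) b * g z‖ < 1 := by
        rw [norm_mul, Complex.norm_conj]
        calc ‖b‖ * ‖g z‖ ≤ ‖b‖ * 1 :=
              mul_le_mul_of_nonneg_left (hb z hz) (norm_nonneg _)
          _ = ‖b‖ := mul_one _
          _ < 1 := hlt
      intro hcon
      have : (1:ℂ) = (starRingEnd ℂ) b * g z := by linear_combination hcon
      rw [← this] at habs
      simp at habs
    set G : ℂ → ℂ := fun z => (g z - b) * ((1 : ℂ) - (starRingEnd ℂ) b * g z)⁻¹ with hGdef
    have hGd : DifferentiableOn ℂ G (ball 0 1) := by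
      apply (hg.sub_const b).mul
      exact ((differentiableOn_const 1).sub ((differentiableOn_const _).mul hg)).inv hden
    have hG0 : G 0 = 0 := by simp [hGdef, ← hbdef]
    have hGb : ∀ z ∈ ball (0:ℂ) 1, ‖G z‖ ≤ 1 := by
      intro z hz
      have h1 : ‖g z - b‖ ≤ ‖1 - (starRingEnd ℂ) b * g z‖ := by
        rw [Complex.norm_def, Complex.norm_def]
        apply Real.sqrt_le_sqrt
        have hw : (g z).re ^ 2 + (g z).im ^ 2 ≤ 1 := by
          have := hb z hz
          have h2 : ‖g z‖ ^ 2 ≤ 1 := by nlinarith [norm_nonneg (g z)]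
          rwa [Complex.sq_norm, Complex.normSq_apply, ← pow_two, ← pow_two] at h2
        have hbb : b.re ^ 2 + b.im ^ 2 ≤ 1 := by
          have h2 : ‖b‖ ^ 2 ≤ 1 := by nlinarith [norm_nonneg b]
          rwa [Complex.sq_norm, Complex.normSq_apply, ← pow_two, ← pow_two] at h2
        simp only [Complex.normSq_apply, Complex.sub_re, Complex.sub_im, Complex.mul_re,
          Complex.mul_im, Complex.one_re, Complex.one_im, Complex.conj_re, Complex.conj_im]
        nlinarith [mul_nonneg (sub_nonneg.mpr hw) (sub_nonneg.mpr hbb)]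
      rw [hGdef]
      simp only [norm_mul, norm_inv]
      rcases eq_or_ne (‖(1:ℂ) - (starRingEnd ℂ) b * g z‖) 0 with h0 | h0
      · simp [h0]
      · rw [mul_inv_le_iff₀ (lt_of_le_of_ne (norm_nonneg _) (Ne.symm h0)), one_mul]
        exact h1
    -- Cauchy estimate : |G'(0)| ≤ 1
    have hG1 : ‖deriv G 0‖ ≤ 1 := by
      by_contra hcon
      push_neg at hcon
      set t := (1 + ‖deriv G 0‖) / 2 with ht
      have ht1 : 1 < t := by rw [ht]; linarith
      have htlt : t < ‖deriv G 0‖ := by rw [ht]; linarith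
      have hmaps : Set.MapsTo G (ball 0 1) (ball (G 0) t) := by
        intro z hz
        rw [hG0, mem_ball, dist_zero_right]
        exact lt_of_le_of_lt (hGb z hz) ht1
      have := Complex.norm_deriv_le_div_of_mapsTo_ball hGd (hmaps.mono_right ball_subset_closedBall) one_pos
      rw [div_one] at this
      linarith
    -- compute deriv G 0
    have hgd0 : HasDerivAt g (deriv g 0) 0 :=
      (hg.differentiableAt (isOpen_ball.mem_nhds zeromem)).hasDerivAt
    have hnum : HasDerivAt (fun z => g z - b) (deriv g 0) 0 := hgd0.sub_const b
    have hden' : HasDerivAt (fun z => (1:ℂ) - (starRingEnd ℂ) b * g z)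
        (-((starRingEnd ℂ) b * deriv g 0)) 0 := (hgd0.const_mul _).const_sub 1
    have hd0ne : (1:ℂ) - (starRingEnd ℂ) b * g 0 ≠ 0 := hden 0 zeromem
    have hinv : HasDerivAt (fun z => ((1:ℂ) - (starRingEnd ℂ) b * g z)⁻¹)
        (-(-((starRingEnd ℂ) b * deriv g 0)) / ((1:ℂ) - (starRingEnd ℂ) b * g 0) ^ 2) 0 :=
      hden'.inv hd0ne
    have hG' : HasDerivAt G
        (deriv g 0 * ((1:ℂ) - (starRingEnd ℂ) b * g 0)⁻¹ +
          (g 0 - b) * (-(-((starRingEnd ℂ) b * deriv g 0)) / ((1:ℂ) - (starRingEnd ℂ) b * g 0) ^ 2)) 0 :=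
      hnum.mul hinv
    have hder : deriv G 0 = deriv g 0 * ((1:ℂ) - (starRingEnd ℂ) b * b)⁻¹ := by
      rw [hG'.deriv, ← hbdef]
      ring
    -- conclude
    have hkey : deriv g 0 = deriv G 0 * ((1:ℂ) - (starRingEnd ℂ) b * b) := by
      rw [hder]
      field_simp
      exact (mul_div_cancel_right₀ _ hd0ne).symm
    have habs1 : ‖(1:ℂ) - (starRingEnd ℂ) b * b‖ = 1 - ‖b‖ ^ 2 := by
      have : (1:ℂ) - (starRingEnd ℂ) b * b = ((1 - ‖b‖ ^ 2 : ℝ) : ℂ) := by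
        rw [mul_comm, Complex.mul_conj, Complex.sq_norm]
        push_cast
        ring
      rw [this, Complex.norm_real, Real.norm_of_nonneg]
      nlinarith [norm_nonneg b, hlt]
    calc ‖deriv g 0‖
        = ‖deriv G 0‖ * (1 - ‖b‖ ^ 2) := by
          rw [hkey, norm_mul, habs1]
      _ ≤ 1 * (1 - ‖b‖ ^ 2) := by
          apply mul_le_mul_of_nonneg_right hG1
          nlinarith [norm_nonneg b, hlt]
      _ = 1 - ‖g 0‖ ^ 2 := by rw [one_mul, hbdef]

private lemma deriv_eq_ball {F D : ℂ → ℂ} (hFD : ∀ z ∈ ball (0:ℂ) 1, F z = D z) :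
    deriv F 0 = deriv D 0 :=
  Filter.EventuallyEq.deriv_eq
    (Filter.eventuallyEq_of_mem (isOpen_ball.mem_nhds zeromem) hFD)

/-- Carathéodory-type coefficient estimate: if `q` is holomorphic on the unit disk with
`q 0 = 1` and `Re q > 0`, then `|q''(0)/2 - (q'(0))²/2| ≤ 2 - |q'(0)|²/2`. -/
lemma caratheodory2 {q : ℂ → ℂ} (hq : DifferentiableOn ℂ q (ball 0 1)) (hq0 : q 0 = 1)
    (hre : ∀ z ∈ ball (0:ℂ) 1, 0 < (q z).re) :
    ‖deriv (deriv q) 0 / 2 - (deriv q 0) ^ 2 / 2‖ ≤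
      2 - (‖deriv q 0‖) ^ 2 / 2 := by
  have hqa : AnalyticOnNhd ℂ q (ball 0 1) := hq.analyticOnNhd isOpen_ball
  have hne : ∀ z ∈ ball (0:ℂ) 1, q z + 1 ≠ 0 := by
    intro z hz hcon
    have h1 := hre z hz
    have h2 : q z = -1 := by linear_combination hcon
    rw [h2] at h1
    simp at h1
    linarith
  set ω : ℂ → ℂ := fun z => (q z - 1) * (q z + 1)⁻¹ with hωdef
  have hωd : DifferentiableOn ℂ ω (ball 0 1) :=
    (hq.sub_const 1).mul ((hq.add_const 1).inv hne)
  have hω0 : ω 0 = 0 := by simp [hωdef, hq0]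
  have hωlt : ∀ z ∈ ball (0:ℂ) 1, ‖ω z‖ < 1 := by
    intro z hz
    have hpos : 0 < ‖q z + 1‖ := by
      simpa [norm_pos_iff] using hne z hz
    have hlt : ‖q z - 1‖ < ‖q z + 1‖ := by
      rw [Complex.norm_def, Complex.norm_def]
      apply Real.sqrt_lt_sqrt (Complex.normSq_nonneg _)
      simp only [Complex.normSq_apply, Complex.sub_re, Complex.sub_im, Complex.add_re,
        Complex.add_im, Complex.one_re, Complex.one_im]
      nlinarith [hre z hz]
    rw [hωdef]
    simp only [norm_mul, norm_inv]
    rw [mul_inv_lt_iff₀ hpos, one_mul]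
    exact hlt
  -- the Schwarz quotient
  set g : ℂ → ℂ := dslope ω 0 with hgdef
  have hgd : DifferentiableOn ℂ g (ball 0 1) :=
    (Complex.differentiableOn_dslope (isOpen_ball.mem_nhds zeromem)).mpr hωd
  have hga : AnalyticOnNhd ℂ g (ball 0 1) := hgd.analyticOnNhd isOpen_ball
  have hzg : ∀ z : ℂ, z * g z = ω z := by
    intro z
    have := sub_smul_dslope ω 0 z
    rw [sub_zero, hω0, sub_zero, smul_eq_mul] at this
    exact this
  have hgb : ∀ z ∈ ball (0:ℂ) 1, ‖g z‖ ≤ 1 := by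
    intro z hz
    have hmaps : Set.MapsTo ω (ball 0 1) (ball (ω 0) 1) := by
      intro w hw
      rw [hω0, mem_ball, dist_zero_right]
      exact hωlt w hw
    have := Complex.norm_dslope_le_div_of_mapsTo_ball hωd (hmaps.mono_right ball_subset_closedBall) hz
    simpa using this
  have hSP : ‖deriv g 0‖ ≤ 1 - ‖g 0‖ ^ 2 := schwarzPick0 hgd hgb
  -- derivatives of ω via g
  have hωg : ∀ z ∈ ball (0:ℂ) 1,
      HasDerivAt ω (g z + z * deriv g z) z := by
    intro z hz
    have hgz : HasDerivAt g (deriv g z) z :=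
      (hgd.differentiableAt (isOpen_ball.mem_nhds hz)).hasDerivAt
    have : HasDerivAt (fun w => w * g w) (1 * g z + z * deriv g z) z :=
      (hasDerivAt_id z).mul hgz
    rw [one_mul] at this
    exact this.congr_of_eventuallyEq
      (Filter.Eventually.of_forall fun w => (hzg w).symm)
  have hdω : ∀ z ∈ ball (0:ℂ) 1, deriv ω z = g z + z * deriv g z :=
    fun z hz => (hωg z hz).deriv
  have hdω0 : deriv ω 0 = g 0 := by
    rw [hdω 0 zeromem]; ring
  have hddω0 : deriv (deriv ω) 0 = 2 * deriv g 0 := by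
    rw [deriv_eq_ball hdω]
    have hg0 : HasDerivAt g (deriv g 0) 0 :=
      (hgd.differentiableAt (isOpen_ball.mem_nhds zeromem)).hasDerivAt
    have hdg0 : HasDerivAt (deriv g) (deriv (deriv g) 0) 0 :=
      ((hga.deriv 0 zeromem).differentiableAt).hasDerivAt
    have : HasDerivAt (fun z => g z + z * deriv g z)
        (deriv g 0 + (1 * deriv g 0 + 0 * deriv (deriv g) 0)) 0 :=
      hg0.add ((hasDerivAt_id 0).mul hdg0)
    rw [this.deriv]; ring
  -- derivatives of ω via q
  have hωq : ∀ z ∈ ball (0:ℂ) 1,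
      HasDerivAt ω (deriv q z * (q z + 1)⁻¹ +
        (q z - 1) * (-(deriv q z) / (q z + 1) ^ 2)) z := by
    intro z hz
    have hqz : HasDerivAt q (deriv q z) z :=
      (hq.differentiableAt (isOpen_ball.mem_nhds hz)).hasDerivAt
    exact (hqz.sub_const 1).mul ((hqz.add_const 1).inv (hne z hz))
  have hdωq : ∀ z ∈ ball (0:ℂ) 1, deriv ω z = deriv q z * (q z + 1)⁻¹ +
      (q z - 1) * (-(deriv q z) / (q z + 1) ^ 2) :=
    fun z hz => (hωq z hz).deriv
  have hdωq0 : deriv ω 0 = deriv q 0 / 2 := by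
    rw [hdωq 0 zeromem, hq0]
    norm_num
    ring
  have hddωq0 : deriv (deriv ω) 0 = deriv (deriv q) 0 / 2 - (deriv q 0) ^ 2 / 2 := by
    rw [deriv_eq_ball hdωq]
    have hq0' : HasDerivAt q (deriv q 0) 0 :=
      (hq.differentiableAt (isOpen_ball.mem_nhds zeromem)).hasDerivAt
    have hdq0 : HasDerivAt (deriv q) (deriv (deriv q) 0) 0 :=
      ((hqa.deriv 0 zeromem).differentiableAt).hasDerivAt
    have h1 : HasDerivAt (fun z => deriv q z * (q z + 1)⁻¹)
        (deriv (deriv q) 0 * (q 0 + 1)⁻¹ +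
          deriv q 0 * (-(deriv q 0) / (q 0 + 1) ^ 2)) 0 :=
      hdq0.mul ((hq0'.add_const 1).inv (hne 0 zeromem))
    have h2 : HasDerivAt (fun z => (q z - 1) * (-(deriv q z) / (q z + 1) ^ 2))
        (deriv q 0 * (-(deriv q 0) / (q 0 + 1) ^ 2) +
          (q 0 - 1) * deriv (fun z => -(deriv q z) / (q z + 1) ^ 2) 0) 0 := by
      apply (hq0'.sub_const 1).mul
      apply DifferentiableAt.hasDerivAt
      apply DifferentiableAt.div
      · exact (hqa.deriv 0 zeromem).differentiableAt.neg
      · exact ((hqa 0 zeromem).differentiableAt.add_const 1).pow 2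
      · exact pow_ne_zero 2 (hne 0 zeromem)
    have := (show HasDerivAt (fun z => deriv q z * (q z + 1)⁻¹ + (q z - 1) * (-(deriv q z) / (q z + 1) ^ 2)) _ 0 from h1.add h2).deriv
    rw [this, hq0]
    norm_num
    ring
  -- combine
  have hgval : g 0 = deriv q 0 / 2 := by rw [← hdω0, hdωq0]
  have hgd0 : 2 * deriv g 0 = deriv (deriv q) 0 / 2 - (deriv q 0) ^ 2 / 2 := by
    rw [← hddω0, hddωq0]
  calc ‖deriv (deriv q) 0 / 2 - deriv q 0 ^ 2 / 2‖
      = 2 * ‖deriv g 0‖ := by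
        rw [← hgd0, norm_mul]
        simp
    _ ≤ 2 * (1 - ‖g 0‖ ^ 2) := by linarith
    _ = 2 - ‖deriv q 0‖ ^ 2 / 2 := by
        rw [hgval, norm_div]
        simp
        ring

private lemma deriv_eq_ball' {F D : ℂ → ℂ} (hFD : ∀ z ∈ ball (0:ℂ) 1, F z = D z)
    {z : ℂ} (hz : z ∈ ball (0:ℂ) 1) : deriv F z = deriv D z :=
  Filter.EventuallyEq.deriv_eq
    (Filter.eventuallyEq_of_mem (isOpen_ball.mem_nhds hz) hFD)

private lemma Qderiv {h : ℂ → ℂ} (hha : AnalyticOnNhd ℂ h (ball 0 1)) (β : ℂ)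
    {z : ℂ} (hz : z ∈ ball (0:ℂ) 1) :
    HasDerivAt (fun w => Complex.exp (β * h w) * (1 + w * deriv h w))
      (Complex.exp (β * h z) *
        (β * deriv h z * (1 + z * deriv h z) + (deriv h z + z * deriv (deriv h) z))) z := by
  have hhz : HasDerivAt h (deriv h z) z :=
    ((hha z hz).differentiableAt).hasDerivAt
  have hh'z : HasDerivAt (deriv h) (deriv (deriv h) z) z :=
    ((hha.deriv z hz).differentiableAt).hasDerivAt
  have e2 : HasDerivAt (fun w => Complex.exp (β * h w))
      (Complex.exp (β * h z) * (β * deriv h z)) z := (hhz.const_mul β).cexp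
  have e3 : HasDerivAt (fun w => 1 + w * deriv h w)
      (1 * deriv h z + z * deriv (deriv h) z) z :=
    ((hasDerivAt_id z).mul hh'z).const_add 1
  have e4 : HasDerivAt (fun w => Complex.exp (β * h w) * (1 + w * deriv h w)) _ z := e2.mul e3
  convert e4 using 1
  ring

private lemma Qderiv0 {h : ℂ → ℂ} (hha : AnalyticOnNhd ℂ h (ball 0 1)) (hh0 : h 0 = 0) (β : ℂ) :
    deriv (fun w => Complex.exp (β * h w) * (1 + w * deriv h w)) 0 = (β + 1) * deriv h 0 := by
  rw [(Qderiv hha β zeromem).deriv, hh0]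
  simp
  ring

private lemma Qderiv2 {h : ℂ → ℂ} (hha : AnalyticOnNhd ℂ h (ball 0 1)) (hh0 : h 0 = 0) (β : ℂ) :
    deriv (deriv (fun w => Complex.exp (β * h w) * (1 + w * deriv h w))) 0
      = (β + 2) * deriv (deriv h) 0 + (β ^ 2 + 2 * β) * (deriv h 0) ^ 2 := by
  rw [deriv_eq_ball (fun z hz => (Qderiv hha β hz).deriv)]
  have hh0' : HasDerivAt h (deriv h 0) 0 :=
    ((hha 0 zeromem).differentiableAt).hasDerivAt
  have hh1 : HasDerivAt (deriv h) (deriv (deriv h) 0) 0 :=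
    ((hha.deriv 0 zeromem).differentiableAt).hasDerivAt
  have hh2 : HasDerivAt (deriv (deriv h)) (deriv (deriv (deriv h)) 0) 0 :=
    ((hha.deriv.deriv 0 zeromem).differentiableAt).hasDerivAt
  have e2 : HasDerivAt (fun w => Complex.exp (β * h w))
      (Complex.exp (β * h 0) * (β * deriv h 0)) 0 := (hh0'.const_mul β).cexp
  -- derivative of the second factor V
  have ev1 : HasDerivAt (fun w => β * deriv h w * (1 + w * deriv h w))
      ((β * deriv (deriv h) 0) * (1 + 0 * deriv h 0) +
        (β * deriv h 0) * (1 * deriv h 0 + 0 * deriv (deriv h) 0)) 0 :=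
    (hh1.const_mul β).mul (((hasDerivAt_id 0).mul hh1).const_add 1)
  have ev2 : HasDerivAt (fun w => deriv h w + w * deriv (deriv h) w)
      (deriv (deriv h) 0 + (1 * deriv (deriv h) 0 + 0 * deriv (deriv (deriv h)) 0)) 0 :=
    hh1.add ((hasDerivAt_id 0).mul hh2)
  have eV := ev1.add ev2
  have eD : HasDerivAt (fun w => Complex.exp (β * h w) *
      (β * deriv h w * (1 + w * deriv h w) + (deriv h w + w * deriv (deriv h) w))) _ 0 := e2.mul eV
  rw [eD.deriv, hh0]
  simp
  ring

/-- For `α > 0` and `f ∈ B₁(α)`: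
`|a₃ - ((α+3)/(2(α+2))) a₂²| ≤ 2/(α+2) - ((α+1)²/(2(α+2))) |a₂|²`. -/
theorem stmt_6 (α : ℝ) (hα : 0 < α) (f h : ℂ → ℂ) (hf : BazilevicB1 α f h) :
    ‖coeff3 f - ((α + 3 : ℂ) / (2 * (α + 2))) * (coeff2 f) ^ 2‖ ≤
      2 / (α + 2) - ((α + 1) ^ 2 / (2 * (α + 2))) * (‖coeff2 f‖) ^ 2 := by

  obtain ⟨hfa, hha, hf0, hdf0, hh0, hfe, hpos⟩ := hf
  set A := deriv h 0 with hA
  set B := deriv (deriv h) 0 with hB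
  -- the derivative of f on the ball
  have hderivf : ∀ z ∈ ball (0:ℂ) 1,
      deriv f z = Complex.exp (h z) * (1 + z * deriv h z) := by
    intro z hz
    have hhz : HasDerivAt h (deriv h z) z := ((hha z hz).differentiableAt).hasDerivAt
    have e1 : HasDerivAt (fun w => w * Complex.exp (h w))
        (1 * Complex.exp (h z) + z * (Complex.exp (h z) * deriv h z)) z :=
      (hasDerivAt_id z).mul hhz.cexp
    have e2 : HasDerivAt f (1 * Complex.exp (h z) + z * (Complex.exp (h z) * deriv h z)) z :=
      e1.congr_of_eventuallyEq (Filter.eventuallyEq_of_mem (isOpen_ball.mem_nhds hz) hfe)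
    rw [e2.deriv]; ring
  have hQ1 : ∀ z ∈ ball (0:ℂ) 1,
      deriv f z = (fun w => Complex.exp ((1:ℂ) * h w) * (1 + w * deriv h w)) z := by
    intro z hz
    simp only [one_mul]
    exact hderivf z hz
  -- Taylor coefficients of f in terms of those of h
  have hiter2 : iteratedDeriv 2 f 0 = 2 * A := by
    have h2 : iteratedDeriv 2 f = deriv (deriv f) := by
      rw [iteratedDeriv_succ, iteratedDeriv_one]
    rw [h2, deriv_eq_ball (F := deriv f)
      (D := fun w => Complex.exp ((1:ℂ) * h w) * (1 + w * deriv h w)) hQ1,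
      Qderiv0 hha hh0 1]
    ring
  have hiter3 : iteratedDeriv 3 f 0 = 3 * B + 3 * A ^ 2 := by
    have h3 : iteratedDeriv 3 f = deriv (deriv (deriv f)) := by
      rw [iteratedDeriv_succ, iteratedDeriv_succ, iteratedDeriv_one]
    have hstep : ∀ z ∈ ball (0:ℂ) 1, deriv (deriv f) z
        = deriv (fun w => Complex.exp ((1:ℂ) * h w) * (1 + w * deriv h w)) z :=
      fun z hz => deriv_eq_ball' (F := deriv f)
        (D := fun w => Complex.exp ((1:ℂ) * h w) * (1 + w * deriv h w)) hQ1 hz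
    rw [h3, deriv_eq_ball (F := deriv (deriv f))
      (D := deriv (fun w => Complex.exp ((1:ℂ) * h w) * (1 + w * deriv h w))) hstep,
      Qderiv2 hha hh0 1]
    ring
  -- the Carathéodory function q
  set q : ℂ → ℂ := fun z => Complex.exp ((α:ℂ) * h z) * (1 + z * deriv h z) with hqdef
  have hqd : DifferentiableOn ℂ q (ball 0 1) := fun z hz =>
    ((Qderiv hha (α:ℂ) hz).differentiableAt).differentiableWithinAt
  have hq0 : q 0 = 1 := by
    rw [hqdef]
    simp [hh0]
  have hqre : ∀ z ∈ ball (0:ℂ) 1, 0 < (q z).re := by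
    intro z hz
    have hp := hpos z hz
    have hrw : q z = Complex.exp (((α:ℂ) - 1) * h z) * deriv f z := by
      rw [hderivf z hz, hqdef]
      show Complex.exp ((α:ℂ) * h z) * (1 + z * deriv h z) = _
      rw [← mul_assoc, ← Complex.exp_add,
        show ((α:ℂ) - 1) * h z + h z = (α:ℂ) * h z from by ring]
    rw [hrw]
    exact hp
  have hcar := caratheodory2 hqd hq0 hqre
  have hc1 : deriv q 0 = ((α:ℂ) + 1) * A := by
    rw [hqdef]; exact Qderiv0 hha hh0 (α:ℂ)
  have hc2 : deriv (deriv q) 0 = ((α:ℂ) + 2) * B + ((α:ℂ) ^ 2 + 2 * (α:ℂ)) * A ^ 2 := by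
    rw [hqdef]; exact Qderiv2 hha hh0 (α:ℂ)
  -- coefficients
  have hA2 : coeff2 f = A := by rw [coeff2, hiter2]; ring
  have hA3 : coeff3 f = B / 2 + A ^ 2 / 2 := by rw [coeff3, hiter3]; ring
  have hαne : ((α:ℂ) + 2) ≠ 0 := by
    intro hcon
    have h1 : ((α + 2 : ℝ) : ℂ) = 0 := by push_cast; linear_combination hcon
    rw [Complex.ofReal_eq_zero] at h1
    linarith
  -- the key algebraic identity
  have hIdent : coeff3 f - ((α + 3 : ℂ) / (2 * (α + 2))) * (coeff2 f) ^ 2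
      = (deriv (deriv q) 0 / 2 - (deriv q 0) ^ 2 / 2) / ((α:ℂ) + 2) := by
    rw [hA2, hA3, hc1, hc2]
    field_simp
    ring
  rw [hIdent, norm_div]
  have habsα : ‖(α:ℂ) + 2‖ = α + 2 := by
    rw [show ((α:ℂ) + 2) = ((α + 2 : ℝ) : ℂ) from by push_cast; ring,
      Complex.norm_real, Real.norm_of_nonneg (by linarith)]
  have habsc1 : ‖deriv q 0‖ = (α + 1) * ‖coeff2 f‖ := by
    rw [hc1, norm_mul, hA2,
      show ((α:ℂ) + 1) = ((α + 1 : ℝ) : ℂ) from by push_cast; ring,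
      Complex.norm_real, Real.norm_of_nonneg (by linarith)]
  rw [habsα]
  rw [habsc1] at hcar
  rw [div_le_iff₀ (by linarith : (0:ℝ) < α + 2)]
  refine hcar.trans (le_of_eq ?_)
  field_simp
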